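/- (Theorem 2, Convergence of the Objective Value) Assume each f_i : ℝⁿ → ℝ is convex, coercive, and differentiable with L_i-Lipschitz gradient, and let x* be a global minimizer of f(x) = (1/N)·Σ_i f_i(x) with f* = f(x*). Let x^(k) ∈ ℝ^{N×n} be a sequence such that sup_k f̄(x̄^(k)) < ∞, lim_{k→∞} ‖x̃^(k)‖ = 0, and lim_{k→∞} ‖J·g(x^(k))‖ = 0. Then lim_{k→∞} f̄(x̄^(k)) = f* and lim_{k→∞} f̄(x^(k)) = f*. -/

import Mathlib

open scoped BigOperators
open Filter

noncomputable section

/-- Row-space: each agent holds a vector in ℝⁿ (Euclidean). -/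
abbrev Vec (n : ℕ) := EuclideanSpace ℝ (Fin n)

/-- A "matrix" in ℝ^{N×n}, represented row-wise. -/
abbrev Mat (N n : ℕ) := Fin N → Vec n

/-- Row-mean operator `B ↦ J·B` with `J = (1/N)·11ᵀ`. -/
def meanM {N n : ℕ} (B : Mat N n) : Mat N n := fun _ => (N : ℝ)⁻¹ • ∑ i, B i

/-- Consensus violation `B̃ = B − B̄`. -/
def tilde {N n : ℕ} (B : Mat N n) : Mat N n := B - meanM B

/-- Frobenius norm of a row-wise matrix. -/
def fnorm {N n : ℕ} (B : Mat N n) : ℝ := Real.sqrt (∑ i, ‖B i‖ ^ 2)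

/-- Spectral norm (ℓ₂ operator norm) of a square matrix. -/
def specNorm {N : ℕ} (A : Matrix (Fin N) (Fin N) ℝ) : ℝ :=
  ‖LinearMap.toContinuousLinearMap (Matrix.toEuclideanLin A)‖

/-- Action of an N×N matrix on a row-wise N×n matrix. -/
def Wact {N n : ℕ} (W : Matrix (Fin N) (Fin N) ℝ) (B : Mat N n) : Mat N n :=
  fun i => ∑ j, W i j • B j

/-- Action of a diagonal matrix `diag a` on a row-wise matrix. -/
def dAct {N n : ℕ} (a : Fin N → ℝ) (B : Mat N n) : Mat N n := fun i => a i • B i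

/-- The matrix of row-wise gradients: i-th row is `∇f_i(x_i)ᵀ`. -/
def gRow {N n : ℕ} (f : Fin N → Vec n → ℝ) (x : Mat N n) : Mat N n :=
  fun i => gradient (f i) (x i)

/-- The all-(1/N) matrix `J = (1/N)·11ᵀ`. -/
def Jmat (N : ℕ) : Matrix (Fin N) (Fin N) ℝ := Matrix.of fun _ _ => (N : ℝ)⁻¹

/-- Double stochasticity of `W`. -/
def DoublyStochastic {N : ℕ} (W : Matrix (Fin N) (Fin N) ℝ) : Prop :=
  (∀ i, ∑ j, W i j = 1) ∧ (∀ j, ∑ i, W i j = 1)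

/-- The aggregate objective `f̄(x) = (1/N)Σᵢ fᵢ(xᵢ)` over the rows of `x`. -/
def fbar {N n : ℕ} (f : Fin N → Vec n → ℝ) (x : Mat N n) : ℝ :=
  (N : ℝ)⁻¹ * ∑ i, f i (x i)

lemma grad_ineq {n : ℕ} (f : Vec n → ℝ) (hf : Differentiable ℝ f)
    (hc : ConvexOn ℝ Set.univ f) (a b : Vec n) :
    f b + (inner ℝ (gradient f b) (a - b) : ℝ) ≤ f a := by
  set φ : ℝ → ℝ := fun t => f (t • (a - b) + b) with hφ
  have hline : HasDerivAt (fun s : ℝ => s • (a - b) + b) (a - b) 0 := by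
    simpa using ((hasDerivAt_id (0:ℝ)).smul_const (a - b)).add_const b
  have hfd : HasFDerivAt f ((InnerProductSpace.toDual ℝ (Vec n) (gradient f b) :
      Vec n →L[ℝ] ℝ)) ((fun s : ℝ => s • (a - b) + b) 0) := by
    simp only [zero_smul, zero_add]
    exact (hf b).hasGradientAt.hasFDerivAt
  have hφd : HasDerivAt φ (inner ℝ (gradient f b) (a - b) : ℝ) 0 := by
    have h := hfd.comp_hasDerivAt 0 hline
    simpa [hφ, Function.comp_def, InnerProductSpace.toDual_apply_apply] using h
  have hcφ : ConvexOn ℝ Set.univ φ := by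
    have h := hc.comp_affineMap (AffineMap.lineMap b a : ℝ →ᵃ[ℝ] Vec n)
    have hfun : f ∘ ⇑(AffineMap.lineMap b a : ℝ →ᵃ[ℝ] Vec n) = φ := by
      funext t
      simp [hφ, Function.comp, AffineMap.lineMap_apply, vsub_eq_sub, vadd_eq_add, smul_sub]
    rw [Set.preimage_univ, hfun] at h
    exact h
  have hs := hcφ.le_slope_of_hasDerivAt (Set.mem_univ (0:ℝ)) (Set.mem_univ 1) one_pos hφd
  have hφ1 : φ 1 = f a := by simp [hφ]
  have hφ0 : φ 0 = f b := by simp [hφ]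
  rw [slope_def_field, hφ1, hφ0] at hs
  have : (inner ℝ (gradient f b) (a - b) : ℝ) ≤ f a - f b := by
    simpa using hs
  linarith

lemma row_le_fnorm {N n : ℕ} (B : Mat N n) (i : Fin N) : ‖B i‖ ≤ fnorm B := by
  have h : ‖B i‖ ^ 2 ≤ ∑ j, ‖B j‖ ^ 2 :=
    Finset.single_le_sum (f := fun j => ‖B j‖ ^ 2) (fun j _ => sq_nonneg _) (Finset.mem_univ i)
  calc ‖B i‖ = Real.sqrt (‖B i‖ ^ 2) := (Real.sqrt_sq (norm_nonneg _)).symm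
    _ ≤ fnorm B := Real.sqrt_le_sqrt h

/-- Theorem 2 (Convergence of the objective value): for convex, coercive, Lipschitz-smooth
`fᵢ` with aggregate minimum `f*`, if `f̄(x̄^(k))` is bounded above, `‖x̃^(k)‖ → 0` and
`‖J·g(x^(k))‖ → 0`, then `f̄(x̄^(k)) → f*` and `f̄(x^(k)) → f*`. -/

theorem stmt19 (N n : ℕ) (hN : 1 ≤ N) (hn : 1 ≤ n)
    (f : Fin N → Vec n → ℝ) (hf : ∀ i, Differentiable ℝ (f i))
    (hconv : ∀ i, ConvexOn ℝ Set.univ (f i))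
    (hcoer : ∀ i, ∀ M : ℝ, ∃ R : ℝ, ∀ y : Vec n, R ≤ ‖y‖ → M ≤ f i y)
    (L : ℝ) (hL : 0 ≤ L)
    (hLip : ∀ i, ∀ y w : Vec n, ‖gradient (f i) y - gradient (f i) w‖ ≤ L * ‖y - w‖)
    (xstar : Vec n) (fstar : ℝ)
    (hfstar : fstar = (N : ℝ)⁻¹ * ∑ i, f i xstar)
    (hmin : ∀ y : Vec n, fstar ≤ (N : ℝ)⁻¹ * ∑ i, f i y)
    (x : ℕ → Mat N n)
    (hbdd : ∃ C : ℝ, ∀ k, fbar f (meanM (x k)) ≤ C)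
    (hxt : Filter.Tendsto (fun k => fnorm (tilde (x k))) Filter.atTop (nhds 0))
    (hg : Filter.Tendsto (fun k => fnorm (meanM (gRow f (x k)))) Filter.atTop (nhds 0)) :
    Filter.Tendsto (fun k => fbar f (meanM (x k))) Filter.atTop (nhds fstar) ∧
      Filter.Tendsto (fun k => fbar f (x k)) Filter.atTop (nhds fstar) := by
  classical
  obtain ⟨C, hC⟩ := hbdd
  have hN0 : (0:ℝ) < (N:ℝ) := by exact_mod_cast Nat.lt_of_lt_of_le Nat.zero_lt_one hN
  have hNne : (N:ℝ) ≠ 0 := ne_of_gt hN0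
  have hNinv : (0:ℝ) ≤ (N:ℝ)⁻¹ := by positivity
  have hi0 : (0:ℕ) < N := hN
  set i0 : Fin N := ⟨0, hi0⟩ with hi0def
  set xb : ℕ → Vec n := fun k => (N : ℝ)⁻¹ • ∑ i, x k i with hxb
  set h1 : ℕ → ℝ := fun k => fnorm (meanM (gRow f (x k))) with hh1
  set h2 : ℕ → ℝ := fun k => fnorm (tilde (x k)) with hh2
  have h2nn : ∀ k, 0 ≤ h2 k := fun k => Real.sqrt_nonneg _
  have hFbar : ∀ k, fbar f (meanM (x k)) = (N:ℝ)⁻¹ * ∑ i, f i (xb k) := fun k => rfl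
  have hgi : ∀ (i : Fin N) (a b : Vec n),
      f i b + (inner ℝ (gradient (f i) b) (a - b) : ℝ) ≤ f i a :=
    fun i => grad_ineq (f i) (hf i) (hconv i)
  have htrow : ∀ k i, ‖x k i - xb k‖ ≤ h2 k := by
    intro k i
    have h : tilde (x k) i = x k i - xb k := rfl
    have := row_le_fnorm (tilde (x k)) i
    rw [h] at this
    exact this
  -- each f i is bounded below
  have hlb : ∀ i, ∃ m : ℝ, ∀ y, m ≤ f i y := by
    intro i
    obtain ⟨R, hR⟩ := hcoer i 0
    obtain ⟨y0, hy0mem, hy0⟩ := (isCompact_closedBall (0 : Vec n) (max R 0)).exists_isMinOn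
      ⟨0, Metric.mem_closedBall_self (le_max_right R 0)⟩ (hf i).continuous.continuousOn
    refine ⟨min 0 (f i y0), fun y => ?_⟩
    by_cases hy : ‖y‖ ≤ max R 0
    · exact le_trans (min_le_right _ _) (hy0 (by simpa [mem_closedBall_zero_iff] using hy))
    · exact le_trans (min_le_left _ _)
        (hR y (le_trans (le_max_left _ _) (le_of_lt (not_le.mp hy))))
  choose m hm using hlb
  -- bound on ‖xb k‖
  obtain ⟨R, hR⟩ := hcoer i0 ((N:ℝ) * (C + 1) - ((∑ i, m i) - m i0))
  have hxbR : ∀ k, ‖xb k‖ ≤ R := by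
    intro k
    by_contra hk
    have hf0 := hR (xb k) (not_le.mp hk).le
    have h2' : ∑ i ∈ Finset.univ.erase i0, m i = (∑ i, m i) - m i0 :=
      Finset.sum_erase_eq_sub (Finset.mem_univ i0)
    have h3' : f i0 (xb k) + ∑ i ∈ Finset.univ.erase i0, f i (xb k) = ∑ i, f i (xb k) :=
      Finset.add_sum_erase _ (fun i => f i (xb k)) (Finset.mem_univ i0)
    have h4' : ∑ i ∈ Finset.univ.erase i0, m i ≤ ∑ i ∈ Finset.univ.erase i0, f i (xb k) :=
      Finset.sum_le_sum (fun i _ => hm i _)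
    have hsum : (N:ℝ) * (C+1) ≤ ∑ i, f i (xb k) := by
      calc (N:ℝ)*(C+1)
          = ((N:ℝ)*(C+1) - ((∑ i, m i) - m i0)) + ((∑ i, m i) - m i0) := by ring
        _ ≤ f i0 (xb k) + ∑ i ∈ Finset.univ.erase i0, f i (xb k) := by
            have h4'' := h4'
            rw [h2'] at h4''
            exact add_le_add hf0 h4''
        _ = ∑ i, f i (xb k) := h3'
    have hCk := hC k
    rw [hFbar k] at hCk
    have hfin : C + 1 ≤ (N:ℝ)⁻¹ * ∑ i, f i (xb k) := by
      have hmul := mul_le_mul_of_nonneg_left hsum hNinv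
      calc C + 1 = (N:ℝ)⁻¹ * ((N:ℝ)*(C+1)) := by field_simp
        _ ≤ _ := hmul
    linarith
  set D : ℝ := R + ‖xstar‖ with hD
  have hxbD : ∀ k, ‖xb k - xstar‖ ≤ D := fun k =>
    le_trans (norm_sub_le _ _) (add_le_add (hxbR k) le_rfl)
  have hD0 : (0:ℝ) ≤ D := le_trans (norm_nonneg (xb 0 - xstar)) (hxbD 0)
  -- gradient averages
  set G : ℕ → Vec n := fun k => (N:ℝ)⁻¹ • ∑ i, gradient (f i) (xb k) with hG
  set Gb : ℕ → Vec n := fun k => (N:ℝ)⁻¹ • ∑ i, gradient (f i) (x k i) with hGb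
  have hGble : ∀ k, ‖Gb k‖ ≤ h1 k := by
    intro k
    have h : meanM (gRow f (x k)) i0 = Gb k := rfl
    have := row_le_fnorm (meanM (gRow f (x k))) i0
    rw [h] at this
    exact this
  have hGGb : ∀ k, ‖G k - Gb k‖ ≤ L * h2 k := by
    intro k
    have h0 : G k - Gb k =
        (N:ℝ)⁻¹ • ∑ i, (gradient (f i) (xb k) - gradient (f i) (x k i)) := by
      simp only [hG, hGb]
      rw [← smul_sub, Finset.sum_sub_distrib]
    rw [h0]
    have hb : ∀ i ∈ Finset.univ,
        ‖gradient (f i) (xb k) - gradient (f i) (x k i)‖ ≤ L * h2 k := by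
      intro i _
      refine le_trans (hLip i _ _) ?_
      rw [norm_sub_rev]
      exact mul_le_mul_of_nonneg_left (htrow k i) hL
    calc ‖(N:ℝ)⁻¹ • ∑ i, (gradient (f i) (xb k) - gradient (f i) (x k i))‖
        = (N:ℝ)⁻¹ * ‖∑ i, (gradient (f i) (xb k) - gradient (f i) (x k i))‖ := by
          rw [norm_smul, Real.norm_eq_abs, abs_of_nonneg hNinv]
      _ ≤ (N:ℝ)⁻¹ * ∑ i, ‖gradient (f i) (xb k) - gradient (f i) (x k i)‖ :=
          mul_le_mul_of_nonneg_left (norm_sum_le _ _) hNinv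
      _ ≤ (N:ℝ)⁻¹ * ∑ _i : Fin N, L * h2 k :=
          mul_le_mul_of_nonneg_left (Finset.sum_le_sum hb) hNinv
      _ = L * h2 k := by
          rw [Finset.sum_const, Finset.card_univ, Fintype.card_fin, nsmul_eq_mul,
            ← mul_assoc, inv_mul_cancel₀ hNne, one_mul]
  have hGle : ∀ k, ‖G k‖ ≤ h1 k + L * h2 k := by
    intro k
    calc ‖G k‖ = ‖Gb k + (G k - Gb k)‖ := by congr 1; abel
      _ ≤ ‖Gb k‖ + ‖G k - Gb k‖ := norm_add_le _ _
      _ ≤ h1 k + L * h2 k := add_le_add (hGble k) (hGGb k)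
  -- key inequality for goal 1
  have key1 : ∀ k, ((N:ℝ)⁻¹ * ∑ i, f i (xb k)) - fstar ≤ (h1 k + L * h2 k) * D := by
    intro k
    have hsum : ∑ i, (f i (xb k) + (inner ℝ (gradient (f i) (xb k)) (xstar - xb k) : ℝ)) ≤
        ∑ i, f i xstar := Finset.sum_le_sum fun i _ => hgi i xstar (xb k)
    rw [Finset.sum_add_distrib, ← sum_inner] at hsum
    have hmul := mul_le_mul_of_nonneg_left hsum hNinv
    rw [mul_add] at hmul
    have hinner : (N:ℝ)⁻¹ * (inner ℝ (∑ i, gradient (f i) (xb k)) (xstar - xb k) : ℝ)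
        = (inner ℝ (G k) (xstar - xb k) : ℝ) := (real_inner_smul_left _ _ _).symm
    rw [hinner, ← hfstar] at hmul
    have hcs : (inner ℝ (G k) (xb k - xstar) : ℝ) ≤ ‖G k‖ * ‖xb k - xstar‖ :=
      real_inner_le_norm _ _
    have heq : (inner ℝ (G k) (xb k - xstar) : ℝ) = -(inner ℝ (G k) (xstar - xb k) : ℝ) := by
      rw [← inner_neg_right]; congr 1; abel
    rw [heq] at hcs
    have hnd : ‖G k‖ * ‖xb k - xstar‖ ≤ (h1 k + L * h2 k) * D :=
      mul_le_mul (hGle k) (hxbD k) (norm_nonneg _) (le_trans (norm_nonneg _) (hGle k))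
    have test : ((N:ℝ)⁻¹ * ∑ i, f i (xb k)) + (inner ℝ (G k) (xstar - xb k) : ℝ) ≤ fstar := hmul
    calc ((N:ℝ)⁻¹ * ∑ i, f i (xb k)) - fstar
        ≤ -(inner ℝ (G k) (xstar - xb k) : ℝ) := by linarith [test]
      _ ≤ ‖G k‖ * ‖xb k - xstar‖ := hcs
      _ ≤ (h1 k + L * h2 k) * D := hnd
  have t1 : Filter.Tendsto (fun k => (h1 k + L * h2 k) * D) Filter.atTop (nhds 0) := by
    have := (hg.add (hxt.const_mul L)).mul_const D
    simpa using this
  have hnonneg : ∀ k, 0 ≤ ((N:ℝ)⁻¹ * ∑ i, f i (xb k)) - fstar := fun k =>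
    sub_nonneg.mpr (hmin (xb k))
  have goal1' : Filter.Tendsto (fun k => ((N:ℝ)⁻¹ * ∑ i, f i (xb k)) - fstar)
      Filter.atTop (nhds 0) := squeeze_zero hnonneg key1 t1
  have goal1 : Filter.Tendsto (fun k => fbar f (meanM (x k))) Filter.atTop (nhds fstar) := by
    have h := goal1'.add_const fstar
    rw [zero_add] at h
    have he : (fun k => (((N:ℝ)⁻¹ * ∑ i, f i (xb k)) - fstar) + fstar) =
        (fun k => fbar f (meanM (x k))) := by
      funext k; rw [hFbar k]; ring
    rwa [he] at h
  -- goal 2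
  set E : ℝ := (∑ i, ‖gradient (f i) xstar‖) + L * D with hE
  have hgradstar : ∀ i, ‖gradient (f i) xstar‖ ≤ ∑ j, ‖gradient (f j) xstar‖ := fun i =>
    Finset.single_le_sum (f := fun j => ‖gradient (f j) xstar‖) (fun j _ => norm_nonneg _) (Finset.mem_univ i)
  have hgradxb : ∀ k i, ‖gradient (f i) (xb k)‖ ≤ E := by
    intro k i
    have hns := norm_sub_norm_le (gradient (f i) (xb k)) (gradient (f i) xstar)
    have hlip := le_trans (hLip i (xb k) xstar) (mul_le_mul_of_nonneg_left (hxbD k) hL)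
    have := hgradstar i
    rw [hE]
    linarith
  have hgradxi : ∀ k i, ‖gradient (f i) (x k i)‖ ≤ E + L * h2 k := by
    intro k i
    have h' : ‖gradient (f i) (x k i) - gradient (f i) (xb k)‖ ≤ L * h2 k :=
      le_trans (hLip i _ _) (mul_le_mul_of_nonneg_left (htrow k i) hL)
    have hns := norm_sub_norm_le (gradient (f i) (x k i)) (gradient (f i) (xb k))
    have := hgradxb k i
    linarith
  have key2 : ∀ k, |fbar f (x k) - fbar f (meanM (x k))| ≤ (E + L * h2 k) * h2 k := by
    intro k
    have hdiff : fbar f (x k) - fbar f (meanM (x k)) =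
        (N:ℝ)⁻¹ * ∑ i, (f i (x k i) - f i (xb k)) := by
      rw [hFbar k]
      show ((N:ℝ)⁻¹ * ∑ i, f i (x k i)) - (N:ℝ)⁻¹ * ∑ i, f i (xb k) = _
      rw [← mul_sub, ← Finset.sum_sub_distrib]
    have hterm : ∀ i, |f i (x k i) - f i (xb k)| ≤ (E + L * h2 k) * h2 k := by
      intro i
      have hE2 : ‖gradient (f i) (xb k)‖ ≤ E + L * h2 k :=
        le_trans (hgradxb k i) (le_add_of_nonneg_right (mul_nonneg hL (h2nn k)))
      have hup : f i (x k i) - f i (xb k) ≤ (E + L * h2 k) * h2 k := by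
        have h := hgi i (xb k) (x k i)
        have hcs : (inner ℝ (gradient (f i) (x k i)) (x k i - xb k) : ℝ) ≤
            ‖gradient (f i) (x k i)‖ * ‖x k i - xb k‖ := real_inner_le_norm _ _
        have heq : (inner ℝ (gradient (f i) (x k i)) (x k i - xb k) : ℝ) =
            -(inner ℝ (gradient (f i) (x k i)) (xb k - x k i) : ℝ) := by
          rw [← inner_neg_right]; congr 1; abel
        rw [heq] at hcs
        have hb : ‖gradient (f i) (x k i)‖ * ‖x k i - xb k‖ ≤ (E + L * h2 k) * h2 k :=
          mul_le_mul (hgradxi k i) (htrow k i) (norm_nonneg _)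
            (le_trans (norm_nonneg _) (hgradxi k i))
        linarith
      have hlo : f i (xb k) - f i (x k i) ≤ (E + L * h2 k) * h2 k := by
        have h := hgi i (x k i) (xb k)
        have hcs : (inner ℝ (gradient (f i) (xb k)) (xb k - x k i) : ℝ) ≤
            ‖gradient (f i) (xb k)‖ * ‖xb k - x k i‖ := real_inner_le_norm _ _
        have heq : (inner ℝ (gradient (f i) (xb k)) (xb k - x k i) : ℝ) =
            -(inner ℝ (gradient (f i) (xb k)) (x k i - xb k) : ℝ) := by
          rw [← inner_neg_right]; congr 1; abel
        rw [heq] at hcs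
        have hb : ‖gradient (f i) (xb k)‖ * ‖xb k - x k i‖ ≤ (E + L * h2 k) * h2 k := by
          rw [norm_sub_rev]
          exact mul_le_mul hE2 (htrow k i) (norm_nonneg _) (le_trans (norm_nonneg _) hE2)
        linarith
      exact abs_le.mpr ⟨by linarith, hup⟩
    rw [hdiff, abs_mul, abs_of_nonneg hNinv]
    calc (N:ℝ)⁻¹ * |∑ i, (f i (x k i) - f i (xb k))|
        ≤ (N:ℝ)⁻¹ * ∑ i, |f i (x k i) - f i (xb k)| :=
          mul_le_mul_of_nonneg_left (Finset.abs_sum_le_sum_abs _ _) hNinv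
      _ ≤ (N:ℝ)⁻¹ * ∑ _i : Fin N, (E + L * h2 k) * h2 k :=
          mul_le_mul_of_nonneg_left (Finset.sum_le_sum fun i _ => hterm i) hNinv
      _ = (E + L * h2 k) * h2 k := by
          rw [Finset.sum_const, Finset.card_univ, Fintype.card_fin, nsmul_eq_mul,
            ← mul_assoc, inv_mul_cancel₀ hNne, one_mul]
  have t2 : Filter.Tendsto (fun k => (E + L * h2 k) * h2 k) Filter.atTop (nhds 0) := by
    have := ((tendsto_const_nhds (x := E) (f := Filter.atTop (α := ℕ))).add
      (hxt.const_mul L)).mul hxt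
    simpa using this
  have hz : Filter.Tendsto (fun k => fbar f (x k) - fbar f (meanM (x k)))
      Filter.atTop (nhds 0) :=
    squeeze_zero_norm (fun k => by simpa [Real.norm_eq_abs] using key2 k) t2
  have goal2 : Filter.Tendsto (fun k => fbar f (x k)) Filter.atTop (nhds fstar) := by
    have h := goal1.add hz
    rw [add_zero] at h
    have he : (fun k => fbar f (meanM (x k)) + (fbar f (x k) - fbar f (meanM (x k)))) =
        (fun k => fbar f (x k)) := by
      funext k; ring
    rwa [he] at h
  exact ⟨goal1, goal2⟩
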